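/- Semi-strong convexity for constrained problems: Under assumptions that f(w) = h(Xw) + qᵀw with h strongly convex (modulus μ > 0) on relevant compact convex sets, W = {w : Cw ≤ b} a compact polyhedron with nonempty optimal set W*, and the Hoffman inequality ‖w − w'‖ ≤ θ‖( [Cw−b]⁺ ; Xw − r* ; qᵀw − s* )‖ holding for the polyhedron W* = {w : Cw ≤ b, Xw = r*, qᵀw = s*} with some projection point w' ∈ W*, there exists β > 0 such that for every w ∈ W: f(w) − f* ≥ (β/2)‖w − Π_{W*}(w)‖², where Π_{W*} is Euclidean projection onto W* and f* is the optimal value. -/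

import Mathlib

open RealInnerProductSpace

set_option maxHeartbeats 1000000

/-- Semi-strong convexity for constrained problems. Under strong convexity of `h`
(modulus `μ`) on the relevant set, a compact convex feasible set `W` with nonempty optimal set
`W* = {w ∈ W : Aw = r*, ⟨q,w⟩ = s*}`, the Hoffman inequality, the bound `M`, and
`β = 1/(θ²((1 + 2‖∇h(r*)‖²)/μ + M))`, for every `w ∈ W`:
`f(w) − f* ≥ (β/2)‖w − Π_{W*}(w)‖²`. -/
theorem stmt_10 (d n : ℕ)
    (h : EuclideanSpace ℝ (Fin n) → ℝ) (hdiff : Differentiable ℝ h)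
    (A : EuclideanSpace ℝ (Fin d) →L[ℝ] EuclideanSpace ℝ (Fin n))
    (q : EuclideanSpace ℝ (Fin d))
    (f : EuclideanSpace ℝ (Fin d) → ℝ)
    (hf : ∀ w, f w = h (A w) + ⟪q, w⟫)
    (W : Set (EuclideanSpace ℝ (Fin d))) (hWconv : Convex ℝ W) (hWcomp : IsCompact W)
    (rstar : EuclideanSpace ℝ (Fin n)) (sstar fstar : ℝ)
    (Wstar : Set (EuclideanSpace ℝ (Fin d)))
    (hWstar : Wstar = {w ∈ W | A w = rstar ∧ ⟪q, w⟫ = sstar})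
    (hWstarne : Wstar.Nonempty)
    (hopt : ∀ w ∈ Wstar, f w = fstar ∧ ∀ u ∈ W, fstar ≤ f u)
    (μ : ℝ) (hμ : 0 < μ)
    (hsc : ∀ w ∈ W, ∀ w' ∈ W,
      h (A w) ≥ h (A w') + ⟪gradient h (A w'), A w - A w'⟫ + μ / 2 * ‖A w - A w'‖ ^ 2)
    (θ : ℝ) (hθ : 0 < θ)
    (hhoffman : ∀ w ∈ W, ∃ wst ∈ Wstar,
      ‖w - wst‖ ^ 2 ≤ θ ^ 2 * (‖A w - rstar‖ ^ 2 + (⟪q, w⟫ - sstar) ^ 2))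
    (M : ℝ) (hM : 0 < M) (hMb : ∀ w ∈ W, f w - fstar ≤ M)
    (proj : EuclideanSpace ℝ (Fin d) → EuclideanSpace ℝ (Fin d))
    (hproj : ∀ w, proj w ∈ Wstar ∧ ∀ u ∈ Wstar, ‖w - proj w‖ ≤ ‖w - u‖)
    (β : ℝ) (hβ : β = 1 / (θ ^ 2 * ((1 + 2 * ‖gradient h rstar‖ ^ 2) / μ + M))) :
    ∀ w ∈ W, f w - fstar ≥ β / 2 * ‖w - proj w‖ ^ 2 := by
  intro w hw
  obtain ⟨wst, hwstS, hhof⟩ := hhoffman w hw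
  have hwstS' := hwstS
  rw [hWstar] at hwstS'
  obtain ⟨hwstW, hA, hqs⟩ := hwstS'
  obtain ⟨hfst, hmin⟩ := hopt wst hwstS
  set g : EuclideanSpace ℝ (Fin n) := gradient h rstar with hg
  set v : EuclideanSpace ℝ (Fin n) := A w - rstar with hv
  set t : ℝ := ⟪q, w⟫ - sstar with ht
  set a : ℝ := ‖v‖ with ha
  set D : ℝ := f w - fstar with hD
  have hD0 : 0 ≤ D := sub_nonneg.2 (hmin w hw)
  have hDM : D ≤ M := hMb w hw
  have ha0 : 0 ≤ a := norm_nonneg _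
  have hfstar : fstar = h rstar + sstar := by rw [← hfst, hf, hA, hqs]
  -- the strong convexity inequality between w and wst
  have hstar : D ≥ ⟪g, v⟫ + t + μ / 2 * a ^ 2 := by
    have h1 := hsc w hw wst hwstW
    rw [hA] at h1
    have hDe : D = h (A w) - h rstar + t := by
      rw [hD, hf, hfstar]; ring
    rw [hDe]
    have : ⟪gradient h rstar, A w - rstar⟫ = ⟪g, v⟫ := rfl
    linarith [h1, this ▸ h1]
  -- first-order optimality: ⟪g, v⟫ + t ≥ 0
  have hc : 0 ≤ ⟪g, v⟫ + t := by
    set φ : ℝ → ℝ := fun l => h (rstar + l • v) + (sstar + l * t) with hφ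
    have hφ0 : φ 0 = fstar := by simp [hφ, hfstar]
    have hφge : ∀ l ∈ Set.Ioc (0 : ℝ) 1, fstar ≤ φ l := by
      intro l hl
      have hmem : wst + l • (w - wst) ∈ W := by
        have hmem0 := hWconv hwstW hw (by linarith [hl.2] : (0:ℝ) ≤ 1 - l)
          (le_of_lt hl.1) (by ring)
        have heq : (1 - l) • wst + l • w = wst + l • (w - wst) := by module
        rwa [heq] at hmem0
      have hAeq : A (wst + l • (w - wst)) = rstar + l • v := by
        rw [map_add, map_smul, map_sub, hA]
      have hqeq : ⟪q, wst + l • (w - wst)⟫ = sstar + l * t := by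
        rw [inner_add_right, real_inner_smul_right, inner_sub_right, hqs]
      have := hmin _ hmem
      rw [hf, hAeq, hqeq] at this
      exact this
    have hderiv : HasDerivAt φ (⟪g, v⟫ + t) 0 := by
      have hγ : HasDerivAt (fun l : ℝ => rstar + l • v) v 0 := by
        simpa using ((hasDerivAt_id (0:ℝ)).smul_const v).const_add rstar
      have hgr : HasFDerivAt h (InnerProductSpace.toDual ℝ _ g) rstar :=
        ((hdiff rstar).hasGradientAt).hasFDerivAt
      have h1 : HasDerivAt (fun l : ℝ => h (rstar + l • v)) ⟪g, v⟫ 0 := by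
        have := hgr.comp_hasDerivAt_of_eq (x := (0:ℝ)) hγ (by simp)
        simpa [InnerProductSpace.toDual_apply_apply, Function.comp_def] using this
      have h2 : HasDerivAt (fun l : ℝ => sstar + l * t) t 0 := by
        simpa using ((hasDerivAt_id (0:ℝ)).mul_const t).const_add sstar
      exact h1.add h2
    have hslope : Filter.Tendsto (slope φ 0) (nhdsWithin 0 (Set.Ioi 0))
        (nhds (⟪g, v⟫ + t)) :=
      (hasDerivAt_iff_tendsto_slope.1 hderiv).mono_left
        (nhdsWithin_mono 0 (fun x hx => ne_of_gt hx))
    refine ge_of_tendsto hslope ?_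
    filter_upwards [Ioc_mem_nhdsGT (zero_lt_one)] with l hl
    have hlpos : 0 < l := hl.1
    have : fstar ≤ φ l := hφge l hl
    have h0 : 0 ≤ φ l - φ 0 := by rw [hφ0]; linarith
    have hdiv : 0 ≤ (φ l - φ 0) / (l - 0) := by
      apply div_nonneg h0 (by linarith)
    simpa [slope_def_field] using hdiv
  -- quantitative bounds
  have hCS : |⟪g, v⟫| ≤ ‖g‖ * a := abs_real_inner_le_norm g v
  have ha2 : μ / 2 * a ^ 2 ≤ D := by linarith
  have hsq : (0:ℝ) ≤ μ / 2 * a ^ 2 := by positivity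
  have habs : |t| ≤ D + ‖g‖ * a := by
    rw [abs_le]
    have hub : ⟪g, v⟫ ≤ ‖g‖ * a := (abs_le.1 hCS).2
    have hlb : -(‖g‖ * a) ≤ ⟪g, v⟫ := (abs_le.1 hCS).1
    constructor
    · linarith
    · linarith
  clear_value g v t a D
  have hgn : (0:ℝ) ≤ ‖g‖ := norm_nonneg _
  have ht2 : t ^ 2 ≤ 2 * M * D + 4 * ‖g‖ ^ 2 / μ * D := by
    have h1 : t ^ 2 ≤ (D + ‖g‖ * a) ^ 2 :=
      sq_le_sq' (abs_le.1 habs).1 (abs_le.1 habs).2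
    have h2 : (D + ‖g‖ * a) ^ 2 ≤ 2 * D ^ 2 + 2 * ‖g‖ ^ 2 * a ^ 2 := by nlinarith [sq_nonneg (D - ‖g‖ * a)]
    have h3 : a ^ 2 ≤ 2 * D / μ := by
      rw [le_div_iff₀ hμ]; linarith
    have h4 : D ^ 2 ≤ M * D := by nlinarith [mul_le_mul_of_nonneg_right hDM hD0]
    have h5 : 2 * ‖g‖ ^ 2 * a ^ 2 ≤ 2 * ‖g‖ ^ 2 * (2 * D / μ) := by
      apply mul_le_mul_of_nonneg_left h3 (by positivity)
    calc t ^ 2 ≤ 2 * D ^ 2 + 2 * ‖g‖ ^ 2 * a ^ 2 := le_trans h1 h2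
      _ ≤ 2 * (M * D) + 2 * ‖g‖ ^ 2 * (2 * D / μ) := by linarith
      _ = 2 * M * D + 4 * ‖g‖ ^ 2 / μ * D := by ring
  have ha2' : a ^ 2 ≤ 2 * D / μ := by
    rw [le_div_iff₀ hμ]; linarith
  set K : ℝ := (1 + 2 * ‖g‖ ^ 2) / μ + M with hK
  clear_value K
  have hKpos : 0 < K := by
    have : 0 < (1 + 2 * ‖g‖ ^ 2) / μ := by positivity
    linarith
  have hsum : a ^ 2 + t ^ 2 ≤ 2 * D * K := by
    have : 2 * D / μ + (2 * M * D + 4 * ‖g‖ ^ 2 / μ * D) = 2 * D * K := by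
      rw [hK]; field_simp; ring
    linarith
  have hβpos : 0 < β := by
    rw [hβ]
    positivity
  have hβK : β * (θ ^ 2 * K) = 1 := by
    rw [hβ, hK]
    field_simp
  have hpw : ‖w - proj w‖ ^ 2 ≤ θ ^ 2 * (a ^ 2 + t ^ 2) := by
    have h1 : ‖w - proj w‖ ≤ ‖w - wst‖ := (hproj w).2 wst hwstS
    have h2 : ‖w - proj w‖ ^ 2 ≤ ‖w - wst‖ ^ 2 := by
      apply pow_le_pow_left₀ (norm_nonneg _) h1
    exact le_trans h2 hhof
  have hfinal : ‖w - proj w‖ ^ 2 ≤ θ ^ 2 * (2 * D * K) := by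
    apply le_trans hpw
    apply mul_le_mul_of_nonneg_left hsum (by positivity)
  rw [ge_iff_le]
  calc β / 2 * ‖w - proj w‖ ^ 2 ≤ β / 2 * (θ ^ 2 * (2 * D * K)) := by
        apply mul_le_mul_of_nonneg_left hfinal (by positivity)
    _ = β * (θ ^ 2 * K) * D := by ring
    _ = D := by rw [hβK]; ring
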